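/- (Marginal increasing convex order of the truncated Euler scheme, along a fixed realization of the common-noise increments.) In the one-dimensional truncated Euler-scheme setup with assumptions (a)–(g) described in the context, if in addition Law(X₀) ⪯_icv Law(Y₀), then Law(X̃_m) ⪯_icv Law(Ỹ_m) for every m = 0, 1, …, M. -/

import Mathlib

set_option maxHeartbeats 1600000


open MeasureTheory ProbabilityTheory

noncomputable section

/-- A real function has linear growth if `|φ(x)| ≤ C (1 + |x|)` for some `C > 0`. -/
def LinGrowth1 (φ : ℝ → ℝ) : Prop := ∃ C > 0, ∀ x, |φ x| ≤ C * (1 + |x|)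

/-- Increasing convex order for measures on `ℝ`: `μ ⪯_icv ν` iff `∫ φ dμ ≤ ∫ φ dν` for every
non-decreasing convex function `φ` of linear growth. -/
def IcvOrder (μ ν : Measure ℝ) : Prop :=
  ∀ φ : ℝ → ℝ, ConvexOn ℝ Set.univ φ → Monotone φ → LinGrowth1 φ →
    ∫ x, φ x ∂μ ≤ ∫ x, φ x ∂ν

/-- `μ` is a probability measure on `ℝ` with finite `p`-th moment. -/
def MemPp1 (p : ℝ) (μ : Measure ℝ) : Prop :=
  IsProbabilityMeasure μ ∧ (∫⁻ ξ, ENNReal.ofReal (|ξ| ^ p) ∂μ) < ⊤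

/-- Codomains for the independence statement: the noises `Z m` and the pair `(X₀, Y₀)`. -/
def mixTypeR (M : ℕ) : Fin M ⊕ Unit → Type
  | Sum.inl _ => ℝ
  | Sum.inr _ => ℝ × ℝ

def mixMSR (M : ℕ) : ∀ i, MeasurableSpace (mixTypeR M i)
  | Sum.inl _ => (inferInstance : MeasurableSpace ℝ)
  | Sum.inr _ => (inferInstance : MeasurableSpace (ℝ × ℝ))

/-- The family consisting of the noises `Z m` together with the pair `(X₀, Y₀)`. -/
def mixFunR {Ω : Type*} {M : ℕ} (X₀ Y₀ : Ω → ℝ) (Z : Fin M → Ω → ℝ) :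
    ∀ i, Ω → mixTypeR M i
  | Sum.inl m => Z m
  | Sum.inr _ => fun ω => (X₀ ω, Y₀ ω)

section Helpers

lemma convex_pair_mono {φ : ℝ → ℝ} (hc : ConvexOn ℝ Set.univ φ) (a w : ℝ) {s s' : ℝ}
    (hs : 0 ≤ s) (hss : s ≤ s') :
    φ (a + s * w) + φ (a - s * w) ≤ φ (a + s' * w) + φ (a - s' * w) := by
  rcases eq_or_lt_of_le (hs.trans hss) with h0 | h0
  · have hs0 : s = 0 := le_antisymm (hss.trans h0.symm.le) hs
    rw [← h0, hs0]
  · set l : ℝ := (s' + s) / (2 * s') with hl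
    have hl0 : 0 ≤ l := by positivity
    have hl1 : 0 ≤ 1 - l := by
      rw [hl, sub_nonneg, div_le_one (by linarith)]
      linarith
    have hsum : l + (1 - l) = 1 := by ring
    have hs'ne : s' ≠ 0 := ne_of_gt h0
    have h1 : a + s * w = l * (a + s' * w) + (1 - l) * (a - s' * w) := by
      rw [hl]
      field_simp
      ring
    have h2 : a - s * w = l * (a - s' * w) + (1 - l) * (a + s' * w) := by
      rw [hl]
      field_simp
      ring
    have c1 := hc.2 (Set.mem_univ (a + s' * w)) (Set.mem_univ (a - s' * w)) hl0 hl1 hsum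
    have c2 := hc.2 (Set.mem_univ (a - s' * w)) (Set.mem_univ (a + s' * w)) hl0 hl1 hsum
    simp only [smul_eq_mul] at c1 c2
    rw [← h1] at c1
    rw [← h2] at c2
    linarith

variable {Ω : Type*} [MeasurableSpace Ω] {P : Measure Ω} [IsProbabilityMeasure P]

lemma integrable_phi_affine {φ : ℝ → ℝ} (hm : Monotone φ) {W : Ω → ℝ} (hW : Measurable W)
    {cW : ℝ} (hWb : ∀ ω, |W ω| ≤ cW) (a s : ℝ) :
    Integrable (fun ω => φ (a + s * W ω)) P := by
  have hmeas : Measurable φ := hm.measurable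
  refine Integrable.mono' (g := fun _ => |φ (a - |s| * cW)| + |φ (a + |s| * cW)|)
    (integrable_const _) ((hmeas.comp (by fun_prop)).aestronglyMeasurable) ?_
  refine Filter.Eventually.of_forall fun ω => ?_
  have hb : |s * W ω| ≤ |s| * cW := by
    rw [abs_mul]
    exact mul_le_mul_of_nonneg_left (hWb ω) (abs_nonneg s)
  have h1 : a - |s| * cW ≤ a + s * W ω := by
    have := (abs_le.1 hb).1; linarith
  have h2 : a + s * W ω ≤ a + |s| * cW := by
    have := (abs_le.1 hb).2; linarith
  have l1 := hm h1
  have l2 := hm h2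
  have key : |φ (a + s * W ω)| ≤ |φ (a - |s| * cW)| + |φ (a + |s| * cW)| := by
    refine abs_le.2 ⟨?_, ?_⟩
    · have := neg_abs_le (φ (a - |s| * cW))
      have := abs_nonneg (φ (a + |s| * cW))
      linarith
    · have := le_abs_self (φ (a + |s| * cW))
      have := abs_nonneg (φ (a - |s| * cW))
      linarith
  simpa using key

lemma kernel_mono {φ : ℝ → ℝ} (hc : ConvexOn ℝ Set.univ φ) (hm : Monotone φ)
    {W : Ω → ℝ} (hW : Measurable W) {cW : ℝ} (hWb : ∀ ω, |W ω| ≤ cW)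
    (hsym : Measure.map (fun ω => -W ω) P = Measure.map W P)
    {a a' s s' : ℝ} (ha : a ≤ a') (hs : 0 ≤ s) (hss : s ≤ s') :
    ∫ ω, φ (a + s * W ω) ∂P ≤ ∫ ω, φ (a' + s' * W ω) ∂P := by
  have hmeas : Measurable φ := hm.measurable
  have step1 : ∫ ω, φ (a + s * W ω) ∂P ≤ ∫ ω, φ (a' + s * W ω) ∂P := by
    refine integral_mono (integrable_phi_affine hm hW hWb _ _)
      (integrable_phi_affine hm hW hWb _ _) fun ω => hm (by linarith)
  have hsymm : ∀ t : ℝ, ∫ ω, φ (a' - t * W ω) ∂P = ∫ ω, φ (a' + t * W ω) ∂P := by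
    intro t
    have hg : Measurable fun z : ℝ => φ (a' + t * z) := hmeas.comp (by fun_prop)
    have e1 : ∫ ω, φ (a' - t * W ω) ∂P = ∫ ω, φ (a' + t * (-W ω)) ∂P := by
      congr 1; funext ω; ring_nf
    rw [e1]
    have e2 : ∫ ω, φ (a' + t * (-W ω)) ∂P
        = ∫ z, φ (a' + t * z) ∂(Measure.map (fun ω => -W ω) P) :=
      (integral_map (hW.neg.aemeasurable) hg.aestronglyMeasurable).symm
    have e3 : ∫ ω, φ (a' + t * W ω) ∂P = ∫ z, φ (a' + t * z) ∂(Measure.map W P) :=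
      (integral_map hW.aemeasurable hg.aestronglyMeasurable).symm
    rw [e2, e3, hsym]
  have step2 : ∫ ω, φ (a' + s * W ω) ∂P ≤ ∫ ω, φ (a' + s' * W ω) ∂P := by
    have i1 := integrable_phi_affine (P := P) hm hW hWb a' s
    have i2 : Integrable (fun ω => φ (a' - s * W ω)) P := by
      have := integrable_phi_affine (P := P) hm hW hWb a' (-s)
      simpa [sub_eq_add_neg, neg_mul] using this
    have i3 := integrable_phi_affine (P := P) hm hW hWb a' s'
    have i4 : Integrable (fun ω => φ (a' - s' * W ω)) P := by
      have := integrable_phi_affine (P := P) hm hW hWb a' (-s')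
      simpa [sub_eq_add_neg, neg_mul] using this
    have hdouble : ∫ ω, (φ (a' + s * W ω) + φ (a' - s * W ω)) ∂P
        ≤ ∫ ω, (φ (a' + s' * W ω) + φ (a' - s' * W ω)) ∂P :=
      integral_mono (i1.add i2) (i3.add i4)
        (fun ω => convex_pair_mono hc a' (W ω) hs hss)
    rw [integral_add i1 i2, integral_add i3 i4, hsymm s, hsymm s'] at hdouble
    linarith
  exact step1.trans step2

lemma measurable_trunc (c : ℝ) : Measurable (fun z : ℝ => if |z| ≤ c then z else 0) :=
  Measurable.ite (measurableSet_le (by fun_prop) measurable_const) measurable_id measurable_const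

omit [IsProbabilityMeasure P] in
lemma trunc_gaussian_symm {Z : Ω → ℝ} (hZ : Measurable Z)
    (hZlaw : Measure.map Z P = gaussianReal 0 1) (c : ℝ) :
    Measure.map (fun ω => -(if |Z ω| ≤ c then Z ω else 0)) P
      = Measure.map (fun ω => if |Z ω| ≤ c then Z ω else 0) P := by
  set τ : ℝ → ℝ := fun z => if |z| ≤ c then z else 0 with hτ
  have hτm : Measurable τ := measurable_trunc c
  have hng : Measure.map (fun z : ℝ => -z) (gaussianReal 0 1) = gaussianReal 0 1 := by
    have := gaussianReal_map_const_mul (μ := 0) (v := 1) (-1)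
    have he : (fun z : ℝ => -z) = ((-1 : ℝ) * ·) := by funext z; simp
    rw [he, this]
    norm_num
  have e1 : (fun ω => -(τ (Z ω))) = (τ ∘ fun z : ℝ => -z) ∘ Z := by
    funext ω
    simp only [Function.comp_apply, hτ, abs_neg]
    split_ifs <;> simp
  have e2 : Measure.map (fun ω => -(τ (Z ω))) P
      = Measure.map (τ ∘ fun z : ℝ => -z) (Measure.map Z P) := by
    rw [e1, Measure.map_map (hτm.comp measurable_neg) hZ]
  have e3 : Measure.map (fun ω => τ (Z ω)) P = Measure.map τ (Measure.map Z P) := by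
    rw [Measure.map_map hτm hZ]; rfl
  rw [e2, e3, hZlaw, ← Measure.map_map hτm (measurable_neg : Measurable fun z : ℝ => -z), hng]

lemma indep_integral_eq {X W : Ω → ℝ} (hX : Measurable X) (hW : Measurable W)
    (hXW : IndepFun X W P) {F : ℝ → ℝ → ℝ}
    (hF : Measurable (fun q : ℝ × ℝ => F q.1 q.2))
    (hInt : Integrable (fun ω => F (X ω) (W ω)) P) :
    ∫ ω, F (X ω) (W ω) ∂P = ∫ x, (∫ ω, F x (W ω) ∂P) ∂(Measure.map X P) := by
  haveI : IsProbabilityMeasure (Measure.map X P) := Measure.isProbabilityMeasure_map hX.aemeasurable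
  haveI : IsProbabilityMeasure (Measure.map W P) := Measure.isProbabilityMeasure_map hW.aemeasurable
  have hmap : Measure.map (fun ω => (X ω, W ω)) P = (Measure.map X P).prod (Measure.map W P) :=
    (indepFun_iff_map_prod_eq_prod_map_map hX.aemeasurable hW.aemeasurable).1 hXW
  have hpm : Measurable fun ω => (X ω, W ω) := hX.prodMk hW
  have h1 : ∫ ω, F (X ω) (W ω) ∂P
      = ∫ q, F q.1 q.2 ∂(Measure.map (fun ω => (X ω, W ω)) P) :=
    (integral_map hpm.aemeasurable hF.aestronglyMeasurable).symm
  have hInt2 : Integrable (fun q : ℝ × ℝ => F q.1 q.2)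
      ((Measure.map X P).prod (Measure.map W P)) := by
    rw [← hmap]
    refine (integrable_map_measure hF.aestronglyMeasurable hpm.aemeasurable).2 ?_
    exact hInt
  have h2 : ∫ q : ℝ × ℝ, F q.1 q.2 ∂((Measure.map X P).prod (Measure.map W P))
      = ∫ x, ∫ w, F x w ∂(Measure.map W P) ∂(Measure.map X P) := integral_prod _ hInt2
  have h3 : ∀ x, ∫ w, F x w ∂(Measure.map W P) = ∫ ω, F x (W ω) ∂P := fun x =>
    integral_map hW.aemeasurable
      ((hF.comp (measurable_prodMk_left : Measurable fun w : ℝ => (x, w))).aestronglyMeasurable)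
  rw [h1, hmap, h2]
  exact integral_congr_ae (Filter.Eventually.of_forall fun x => h3 x)

end Helpers


section Infra

variable {Ω : Type*} [MeasurableSpace Ω] {M : ℕ} (X₀ Y₀ : Ω → ℝ) (Z : Fin M → Ω → ℝ)

/-- The σ-algebra generated by one element of the mixed family. -/
def sAlgR : Fin M ⊕ Unit → MeasurableSpace Ω :=
  fun i => (mixMSR M i).comap (mixFunR X₀ Y₀ Z i)

/-- The filtration generated by the initial data and the first `k` noises. -/
def GAlgR (k : Fin (M + 1)) : MeasurableSpace Ω :=
  ⨆ (i : Fin M ⊕ Unit)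
    (_ : Sum.elim (fun j : Fin M => (j : ℕ) < (k : ℕ)) (fun _ => True) i),
    sAlgR X₀ Y₀ Z i

variable {X₀ Y₀ Z}

lemma sAlgR_le (hX₀ : Measurable X₀) (hY₀ : Measurable Y₀) (hZ : ∀ m, Measurable (Z m)) :
    ∀ i, sAlgR X₀ Y₀ Z i ≤ ‹MeasurableSpace Ω› := by
  intro i
  cases i with
  | inl j => exact (hZ j).comap_le
  | inr u => exact (hX₀.prodMk hY₀).comap_le

lemma GAlgR_le (hX₀ : Measurable X₀) (hY₀ : Measurable Y₀) (hZ : ∀ m, Measurable (Z m)) :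
    ∀ k, GAlgR X₀ Y₀ Z k ≤ ‹MeasurableSpace Ω› :=
  fun _ => iSup₂_le fun i _ => sAlgR_le hX₀ hY₀ hZ i

lemma GAlgR_mono {k k' : Fin (M + 1)} (hkk : (k : ℕ) ≤ (k' : ℕ)) :
    GAlgR X₀ Y₀ Z k ≤ GAlgR X₀ Y₀ Z k' := by
  refine iSup₂_le fun i hi => le_iSup₂ (f := fun i _ => sAlgR X₀ Y₀ Z i) i ?_
  cases i with
  | inl j => exact lt_of_lt_of_le hi hkk
  | inr u => trivial

lemma measurable_G_Z {m : Fin M} {k : Fin (M + 1)} (hmk : (m : ℕ) < (k : ℕ)) :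
    Measurable[GAlgR X₀ Y₀ Z k] (Z m) := by
  have h1 : Measurable[sAlgR X₀ Y₀ Z (Sum.inl m)] (Z m) := fun s hs => ⟨s, hs, rfl⟩
  exact h1.mono (le_iSup₂ (f := fun i _ => sAlgR X₀ Y₀ Z i) (Sum.inl m) hmk) le_rfl

lemma measurable_G_pair (k : Fin (M + 1)) :
    Measurable[GAlgR X₀ Y₀ Z k] (fun ω => (X₀ ω, Y₀ ω)) := by
  have h1 : Measurable[sAlgR X₀ Y₀ Z (Sum.inr ())] (fun ω => (X₀ ω, Y₀ ω)) :=
    fun s hs => ⟨s, hs, rfl⟩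
  exact h1.mono (le_iSup₂ (f := fun i _ => sAlgR X₀ Y₀ Z i) (Sum.inr ()) trivial) le_rfl

lemma indepFun_of_G {P : Measure Ω} [IsProbabilityMeasure P]
    (hX₀ : Measurable X₀) (hY₀ : Measurable Y₀) (hZ : ∀ m, Measurable (Z m))
    (hindep : @iIndepFun _ _ _ _ (mixMSR M) (mixFunR X₀ Y₀ Z) P)
    (m : Fin M) {f : Ω → ℝ} (hf : Measurable[GAlgR X₀ Y₀ Z m.castSucc] f) :
    IndepFun f (Z m) P := by
  have hiI : iIndep (sAlgR X₀ Y₀ Z) P := hindep.iIndep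
  have hbi := indep_biSup_compl (sAlgR_le hX₀ hY₀ hZ) hiI ({Sum.inl m}ᶜ)
  have hle1 : MeasurableSpace.comap f inferInstance ≤ ⨆ i ∈ ({Sum.inl m}ᶜ : Set (Fin M ⊕ Unit)), sAlgR X₀ Y₀ Z i := by
    refine le_trans (Measurable.comap_le hf) (iSup₂_le fun i hi => ?_)
    refine le_iSup₂ (f := fun i _ => sAlgR X₀ Y₀ Z i) i ?_
    cases i with
    | inl j =>
      simp only [Set.mem_compl_iff, Set.mem_singleton_iff]
      intro hc
      have hlt : (j : ℕ) < (m.castSucc : ℕ) := hi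
      have hje : j = m := by simpa using hc
      rw [hje] at hlt
      simp at hlt
    | inr u => simp
  have hle2 : MeasurableSpace.comap (Z m) inferInstance
      ≤ ⨆ i ∈ (({Sum.inl m}ᶜ : Set (Fin M ⊕ Unit))ᶜ), sAlgR X₀ Y₀ Z i := by
    have hmem : Sum.inl m ∈ (({Sum.inl m}ᶜ : Set (Fin M ⊕ Unit))ᶜ) := by simp
    refine le_trans ?_ (le_iSup₂ (f := fun i _ => sAlgR X₀ Y₀ Z i) (Sum.inl m) hmem)
    exact le_rfl
  rw [IndepFun_iff_Indep]
  exact indep_of_indep_of_le_right (indep_of_indep_of_le_left hbi hle1) hle2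

end Infra

/-- Marginal increasing convex order of the truncated Euler schemes of two one-dimensional
McKean–Vlasov equations with common noise, along a fixed realization `z⁰` of the (rescaled)
common-noise increments: under assumptions (a)–(g), if `Law(X₀) ⪯_icv Law(Y₀)` then
`Law(X̃_m) ⪯_icv Law(Ỹ_m)` for every `m = 0, …, M`. -/
theorem truncated_euler_marginal_increasing_convex_order
    {Ω : Type*} [MeasurableSpace Ω] (P : Measure Ω) [IsProbabilityMeasure P]
    {M : ℕ} (hM : 1 ≤ M)
    (p : ℝ) (hp : 2 ≤ p) (T : ℝ) (hT : 0 < T) (h : ℝ) (hhdef : h = T / M)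
    -- initial conditions
    (X₀ Y₀ : Ω → ℝ) (hX₀meas : Measurable X₀) (hY₀meas : Measurable Y₀)
    (hX₀p : MemLp X₀ (ENNReal.ofReal p) P) (hY₀p : MemLp Y₀ (ENNReal.ofReal p) P)
    -- i.i.d. standard normal noises, independent of (X₀, Y₀)
    (Z : Fin M → Ω → ℝ) (hZmeas : ∀ m, Measurable (Z m))
    (hZlaw : ∀ m, Measure.map (Z m) P = gaussianReal 0 1)
    (hindep : @iIndepFun _ _ _ _ (mixMSR M) (mixFunR X₀ Y₀ Z) P)
    -- fixed realization of the rescaled common-noise increments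
    (z0 : Fin M → ℝ)
    -- coefficients
    (b β σ θ : Fin M → ℝ → Measure ℝ → ℝ) (σ0 : Fin M → Measure ℝ → ℝ)
    -- (a) measurability in x and the growth bound
    (hmeas : ∀ m μ, MemPp1 p μ → Measurable (fun x => b m x μ) ∧
      Measurable (fun x => β m x μ) ∧ Measurable (fun x => σ m x μ) ∧
      Measurable (fun x => θ m x μ))
    (L : ℝ) (hL : 0 ≤ L)
    (hgrowth : ∀ m x μ, MemPp1 p μ →
      |b m x μ| + |β m x μ| + |σ m x μ| + |θ m x μ| + |σ0 m μ| ≤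
        L * (1 + |x| + (∫ ξ, |ξ| ^ p ∂μ) ^ (1 / p)))
    -- (b) uniform Lipschitz continuity of b and σ in x
    (Lb Lσ : ℝ) (hLb : 0 ≤ Lb) (hLσ : 0 < Lσ)
    (hbLip : ∀ m μ, MemPp1 p μ → ∀ x y, |b m x μ - b m y μ| ≤ Lb * |x - y|)
    (hσLip : ∀ m μ, MemPp1 p μ → ∀ x y, |σ m x μ - σ m y μ| ≤ Lσ * |x - y|)
    -- (c) convexity of b and σ in x
    (hbconv : ∀ m μ, MemPp1 p μ → ConvexOn ℝ Set.univ (fun x => b m x μ))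
    (hσconv : ∀ m μ, MemPp1 p μ → ConvexOn ℝ Set.univ (fun x => σ m x μ))
    -- (d) b and σ are non-decreasing in μ w.r.t. the increasing convex order
    (hbmono : ∀ m x μ ν, MemPp1 p μ → MemPp1 p ν → IcvOrder μ ν → b m x μ ≤ b m x ν)
    (hσmono : ∀ m x μ ν, MemPp1 p μ → MemPp1 p ν → IcvOrder μ ν → σ m x μ ≤ σ m x ν)
    -- (e) σ⁰ is constant in μ w.r.t. the increasing convex order
    (hσ0const : ∀ m μ ν, MemPp1 p μ → MemPp1 p ν → IcvOrder μ ν → σ0 m μ = σ0 m ν)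
    -- (f) b ≤ β and 0 ≤ σ ≤ θ
    (hbβ : ∀ m x μ, MemPp1 p μ → b m x μ ≤ β m x μ)
    (hσθ : ∀ m x μ, MemPp1 p μ → 0 ≤ σ m x μ ∧ σ m x μ ≤ θ m x μ)
    -- (g) h ∈ (0, min(1, 1/(2 L_b))) (the bound being 1 when L_b = 0)
    (hh0 : 0 < h) (hh1 : h < 1) (hhb : 2 * Lb * h < 1)
    -- the truncated Euler schemes, with truncation threshold c_{h,σ} = 1/(2 √h L_σ)
    (Xt Yt : Fin (M + 1) → Ω → ℝ)
    (hX0 : Xt 0 = X₀) (hY0 : Yt 0 = Y₀)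
    (hXrec : ∀ m : Fin M, ∀ ω, Xt m.succ ω =
      Xt m.castSucc ω + h * b m (Xt m.castSucc ω) (Measure.map (Xt m.castSucc) P) +
        Real.sqrt h * σ m (Xt m.castSucc ω) (Measure.map (Xt m.castSucc) P) *
          (if |Z m ω| ≤ 1 / (2 * Real.sqrt h * Lσ) then Z m ω else 0) +
        Real.sqrt h * σ0 m (Measure.map (Xt m.castSucc) P) * z0 m)
    (hYrec : ∀ m : Fin M, ∀ ω, Yt m.succ ω =
      Yt m.castSucc ω + h * β m (Yt m.castSucc ω) (Measure.map (Yt m.castSucc) P) +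
        Real.sqrt h * θ m (Yt m.castSucc ω) (Measure.map (Yt m.castSucc) P) *
          (if |Z m ω| ≤ 1 / (2 * Real.sqrt h * Lσ) then Z m ω else 0) +
        Real.sqrt h * σ0 m (Measure.map (Yt m.castSucc) P) * z0 m)
    -- increasing convex order of the initial conditions
    (hinit : IcvOrder (Measure.map X₀ P) (Measure.map Y₀ P)) :
    ∀ m : Fin (M + 1), IcvOrder (Measure.map (Xt m) P) (Measure.map (Yt m) P) := by
  have hp0 : (0:ℝ) < p := by linarith
  set q : ENNReal := ENNReal.ofReal p with hq
  have hq1 : (1:ENNReal) ≤ q := ENNReal.one_le_ofReal.2 (by linarith)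
  have hqne0 : q ≠ 0 := (ENNReal.ofReal_pos.2 hp0).ne'
  have hqnetop : q ≠ ⊤ := ENNReal.ofReal_ne_top
  have hsh0 : 0 < Real.sqrt h := Real.sqrt_pos.2 hh0
  set sh : ℝ := Real.sqrt h with hshdef
  set cT : ℝ := 1 / (2 * sh * Lσ) with hcTdef
  have hshne : sh ≠ 0 := ne_of_gt hsh0
  have hLσne : Lσ ≠ 0 := ne_of_gt hLσ
  have hcT0 : 0 < cT := by
    rw [hcTdef]
    exact div_pos one_pos (mul_pos (mul_pos two_pos hsh0) hLσ)
  have hshc : sh * Lσ * cT = 1 / 2 := by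
    rw [hcTdef]
    field_simp
  have hWm : ∀ m : Fin M, Measurable (fun ω => if |Z m ω| ≤ cT then Z m ω else 0) :=
    fun m => (measurable_trunc cT).comp (hZmeas m)
  have hWb : ∀ (m : Fin M) (ω : Ω), |(if |Z m ω| ≤ cT then Z m ω else 0)| ≤ cT := by
    intro m ω
    split_ifs with hw
    · exact hw
    · simpa using hcT0.le
  have hWsym : ∀ m : Fin M,
      Measure.map (fun ω => -(if |Z m ω| ≤ cT then Z m ω else 0)) P
        = Measure.map (fun ω => if |Z m ω| ≤ cT then Z m ω else 0) P :=
    fun m => trunc_gaussian_symm (hZmeas m) (hZlaw m) cT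
  have hmom : ∀ f : Ω → ℝ, Measurable f → MemLp f q P →
      (∫⁻ ξ, ENNReal.ofReal (|ξ| ^ p) ∂(Measure.map f P)) < ⊤ := by
    intro f hf hfLp
    rw [lintegral_map (by fun_prop) hf]
    have h1 := lintegral_rpow_enorm_lt_top_of_eLpNorm_lt_top hqne0 hqnetop hfLp.2
    rw [hq, ENNReal.toReal_ofReal hp0.le] at h1
    refine lt_of_eq_of_lt ?_ h1
    refine lintegral_congr fun ω => ?_
    rw [← ENNReal.ofReal_rpow_of_nonneg (abs_nonneg _) hp0.le, ← Real.norm_eq_abs,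
      ofReal_norm]
  have key : ∀ k : Fin (M + 1),
      (MemLp (Xt k) q P ∧ MemLp (Yt k) q P)
      ∧ (Measurable[GAlgR X₀ Y₀ Z k] (Xt k) ∧ Measurable[GAlgR X₀ Y₀ Z k] (Yt k))
      ∧ IcvOrder (Measure.map (Xt k) P) (Measure.map (Yt k) P) := by
    intro k
    induction k using Fin.induction with
    | zero =>
      refine ⟨⟨?_, ?_⟩, ⟨?_, ?_⟩, ?_⟩
      · rw [hX0]; exact hX₀p
      · rw [hY0]; exact hY₀p
      · rw [hX0]; exact measurable_fst.comp (measurable_G_pair (Y₀ := Y₀) (Z := Z) 0)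
      · rw [hY0]; exact measurable_snd.comp (measurable_G_pair (X₀ := X₀) (Z := Z) 0)
      · rw [hX0, hY0]; exact hinit
    | succ m IH =>
      obtain ⟨⟨hXLp, hYLp⟩, ⟨hXGm, hYGm⟩, hicv⟩ := IH
      have hXm : Measurable (Xt m.castSucc) :=
        hXGm.mono (GAlgR_le hX₀meas hY₀meas hZmeas _) le_rfl
      have hYm : Measurable (Yt m.castSucc) :=
        hYGm.mono (GAlgR_le hX₀meas hY₀meas hZmeas _) le_rfl
      haveI hμP : IsProbabilityMeasure (Measure.map (Xt m.castSucc) P) :=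
        Measure.isProbabilityMeasure_map hXm.aemeasurable
      haveI hνP : IsProbabilityMeasure (Measure.map (Yt m.castSucc) P) :=
        Measure.isProbabilityMeasure_map hYm.aemeasurable
      set μ : Measure ℝ := Measure.map (Xt m.castSucc) P with hμdef
      set ν : Measure ℝ := Measure.map (Yt m.castSucc) P with hνdef
      have hμpp : MemPp1 p μ := ⟨hμP, hmom _ hXm hXLp⟩
      have hνpp : MemPp1 p ν := ⟨hνP, hmom _ hYm hYLp⟩
      have hbm := (hmeas m μ hμpp).1
      have hσm := (hmeas m μ hμpp).2.2.1
      have hβm := (hmeas m ν hνpp).2.1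
      have hθm := (hmeas m ν hνpp).2.2.2
      set R : ℝ := (∫ ξ, |ξ| ^ p ∂μ) ^ (1 / p) with hRdef
      set R' : ℝ := (∫ ξ, |ξ| ^ p ∂ν) ^ (1 / p) with hR'def
      have hR0 : 0 ≤ R := Real.rpow_nonneg
        (integral_nonneg fun ξ => Real.rpow_nonneg (abs_nonneg ξ) p) _
      have hR'0 : 0 ≤ R' := Real.rpow_nonneg
        (integral_nonneg fun ξ => Real.rpow_nonneg (abs_nonneg ξ) p) _
      -- individual coefficient bounds
      have hKb : ∀ x, |b m x μ| ≤ L * (1 + |x| + R) := by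
        intro x
        have hg := hgrowth m x μ hμpp
        have n1 := abs_nonneg (β m x μ); have n2 := abs_nonneg (σ m x μ)
        have n3 := abs_nonneg (θ m x μ); have n4 := abs_nonneg (σ0 m μ)
        linarith
      have hKσ : ∀ x, |σ m x μ| ≤ L * (1 + |x| + R) := by
        intro x
        have hg := hgrowth m x μ hμpp
        have n1 := abs_nonneg (β m x μ); have n2 := abs_nonneg (b m x μ)
        have n3 := abs_nonneg (θ m x μ); have n4 := abs_nonneg (σ0 m μ)
        linarith
      have hKσ0 : |σ0 m μ| ≤ L * (1 + R) := by
        have hg := hgrowth m 0 μ hμpp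
        have n1 := abs_nonneg (β m 0 μ); have n2 := abs_nonneg (σ m 0 μ)
        have n3 := abs_nonneg (θ m 0 μ); have n4 := abs_nonneg (b m 0 μ)
        simp only [abs_zero] at hg
        linarith
      have hKβ : ∀ y, |β m y ν| ≤ L * (1 + |y| + R') := by
        intro y
        have hg := hgrowth m y ν hνpp
        have n1 := abs_nonneg (b m y ν); have n2 := abs_nonneg (σ m y ν)
        have n3 := abs_nonneg (θ m y ν); have n4 := abs_nonneg (σ0 m ν)
        linarith
      have hKθ : ∀ y, |θ m y ν| ≤ L * (1 + |y| + R') := by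
        intro y
        have hg := hgrowth m y ν hνpp
        have n1 := abs_nonneg (b m y ν); have n2 := abs_nonneg (σ m y ν)
        have n3 := abs_nonneg (β m y ν); have n4 := abs_nonneg (σ0 m ν)
        linarith
      have hKσ0' : |σ0 m ν| ≤ L * (1 + R') := by
        have hg := hgrowth m 0 ν hνpp
        have n1 := abs_nonneg (β m 0 ν); have n2 := abs_nonneg (σ m 0 ν)
        have n3 := abs_nonneg (θ m 0 ν); have n4 := abs_nonneg (b m 0 ν)
        simp only [abs_zero] at hg
        linarith
      set κ : ℝ := L * (h + sh * cT + sh * |z0 m|) with hκdef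
      have hκ0 : 0 ≤ κ := by
        rw [hκdef]
        exact mul_nonneg hL (add_nonneg (add_nonneg hh0.le
          (mul_nonneg hsh0.le hcT0.le)) (mul_nonneg hsh0.le (abs_nonneg _)))
      -- a pointwise one-step growth bound, X side
      have habsX : ∀ x w, |w| ≤ cT →
          |x + h * b m x μ + sh * σ m x μ * w + sh * σ0 m μ * z0 m|
            ≤ (1 + κ) * |x| + κ * (1 + R) := by
        intro x w hw
        have hb := hKb x
        have hs := hKσ x
        have hK0 : 0 ≤ L * (1 + |x| + R) := le_trans (abs_nonneg _) hb
        have t1 : |x + h * b m x μ + sh * σ m x μ * w + sh * σ0 m μ * z0 m|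
            ≤ |x| + |h * b m x μ| + |sh * σ m x μ * w| + |sh * σ0 m μ * z0 m| := by
          have a1 := abs_add_le (x + h * b m x μ + sh * σ m x μ * w) (sh * σ0 m μ * z0 m)
          have a2 := abs_add_le (x + h * b m x μ) (sh * σ m x μ * w)
          have a3 := abs_add_le x (h * b m x μ)
          linarith
        have e1 : |h * b m x μ| = h * |b m x μ| := by rw [abs_mul, abs_of_nonneg hh0.le]
        have e2 : |sh * σ m x μ * w| = sh * |σ m x μ| * |w| := by
          rw [abs_mul, abs_mul, abs_of_nonneg hsh0.le]
        have e3 : |sh * σ0 m μ * z0 m| = sh * |σ0 m μ| * |z0 m| := by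
          rw [abs_mul, abs_mul, abs_of_nonneg hsh0.le]
        rw [e1, e2, e3] at t1
        have d1 : h * |b m x μ| ≤ h * (L * (1 + |x| + R)) :=
          mul_le_mul_of_nonneg_left hb hh0.le
        have d2 : sh * |σ m x μ| * |w| ≤ sh * (L * (1 + |x| + R)) * cT :=
          mul_le_mul (mul_le_mul_of_nonneg_left hs hsh0.le) hw (abs_nonneg _)
            (mul_nonneg hsh0.le hK0)
        have d3 : sh * |σ0 m μ| * |z0 m| ≤ sh * (L * (1 + |x| + R)) * |z0 m| := by
          refine mul_le_mul_of_nonneg_right (mul_le_mul_of_nonneg_left ?_ hsh0.le) (abs_nonneg _)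
          have : L * (1 + R) ≤ L * (1 + |x| + R) := by nlinarith [abs_nonneg x, hL]
          linarith [hKσ0]
        have final : |x| + h * (L * (1 + |x| + R)) + sh * (L * (1 + |x| + R)) * cT
            + sh * (L * (1 + |x| + R)) * |z0 m| = (1 + κ) * |x| + κ * (1 + R) := by
          rw [hκdef]; ring
        linarith
      -- a pointwise one-step growth bound, Y side
      have habsY : ∀ y w, |w| ≤ cT →
          |y + h * β m y ν + sh * θ m y ν * w + sh * σ0 m ν * z0 m|
            ≤ (1 + κ) * |y| + κ * (1 + R') := by
        intro y w hw
        have hb := hKβ y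
        have hs := hKθ y
        have hK0 : 0 ≤ L * (1 + |y| + R') := le_trans (abs_nonneg _) hb
        have t1 : |y + h * β m y ν + sh * θ m y ν * w + sh * σ0 m ν * z0 m|
            ≤ |y| + |h * β m y ν| + |sh * θ m y ν * w| + |sh * σ0 m ν * z0 m| := by
          have a1 := abs_add_le (y + h * β m y ν + sh * θ m y ν * w) (sh * σ0 m ν * z0 m)
          have a2 := abs_add_le (y + h * β m y ν) (sh * θ m y ν * w)
          have a3 := abs_add_le y (h * β m y ν)
          linarith
        have e1 : |h * β m y ν| = h * |β m y ν| := by rw [abs_mul, abs_of_nonneg hh0.le]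
        have e2 : |sh * θ m y ν * w| = sh * |θ m y ν| * |w| := by
          rw [abs_mul, abs_mul, abs_of_nonneg hsh0.le]
        have e3 : |sh * σ0 m ν * z0 m| = sh * |σ0 m ν| * |z0 m| := by
          rw [abs_mul, abs_mul, abs_of_nonneg hsh0.le]
        rw [e1, e2, e3] at t1
        have d1 : h * |β m y ν| ≤ h * (L * (1 + |y| + R')) :=
          mul_le_mul_of_nonneg_left hb hh0.le
        have d2 : sh * |θ m y ν| * |w| ≤ sh * (L * (1 + |y| + R')) * cT :=
          mul_le_mul (mul_le_mul_of_nonneg_left hs hsh0.le) hw (abs_nonneg _)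
            (mul_nonneg hsh0.le hK0)
        have d3 : sh * |σ0 m ν| * |z0 m| ≤ sh * (L * (1 + |y| + R')) * |z0 m| := by
          refine mul_le_mul_of_nonneg_right (mul_le_mul_of_nonneg_left ?_ hsh0.le) (abs_nonneg _)
          have : L * (1 + R') ≤ L * (1 + |y| + R') := by nlinarith [abs_nonneg y, hL]
          linarith [hKσ0']
        have final : |y| + h * (L * (1 + |y| + R')) + sh * (L * (1 + |y| + R')) * cT
            + sh * (L * (1 + |y| + R')) * |z0 m| = (1 + κ) * |y| + κ * (1 + R') := by
          rw [hκdef]; ring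
        linarith
      -- explicit recursions
      have hXrec' : ∀ ω, Xt m.succ ω
          = Xt m.castSucc ω + h * b m (Xt m.castSucc ω) μ
            + sh * σ m (Xt m.castSucc ω) μ * (if |Z m ω| ≤ cT then Z m ω else 0)
            + sh * σ0 m μ * z0 m := fun ω => hXrec m ω
      have hYrec' : ∀ ω, Yt m.succ ω
          = Yt m.castSucc ω + h * β m (Yt m.castSucc ω) ν
            + sh * θ m (Yt m.castSucc ω) ν * (if |Z m ω| ≤ cT then Z m ω else 0)
            + sh * σ0 m ν * z0 m := fun ω => hYrec m ω
      -- measurability at the next step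
      have hcs : ((m.castSucc : Fin (M+1)) : ℕ) ≤ ((m.succ : Fin (M+1)) : ℕ) := by
        simp only [Fin.coe_castSucc, Fin.val_succ]
        omega
      have hms : ((m : Fin M) : ℕ) < ((m.succ : Fin (M+1)) : ℕ) := by
        simp only [Fin.val_succ]
        omega
      have hXc : Measurable[GAlgR X₀ Y₀ Z m.succ] (Xt m.castSucc) :=
        hXGm.mono (GAlgR_mono hcs) le_rfl
      have hYc : Measurable[GAlgR X₀ Y₀ Z m.succ] (Yt m.castSucc) :=
        hYGm.mono (GAlgR_mono hcs) le_rfl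
      have hZc : Measurable[GAlgR X₀ Y₀ Z m.succ] (Z m) := measurable_G_Z hms
      have hWc : Measurable[GAlgR X₀ Y₀ Z m.succ]
          (fun ω => if |Z m ω| ≤ cT then Z m ω else 0) := (measurable_trunc cT).comp hZc
      have hXsuccG : Measurable[GAlgR X₀ Y₀ Z m.succ] (Xt m.succ) := by
        have hfe : Xt m.succ = fun ω => Xt m.castSucc ω + h * b m (Xt m.castSucc ω) μ
            + sh * σ m (Xt m.castSucc ω) μ * (if |Z m ω| ≤ cT then Z m ω else 0)
            + sh * σ0 m μ * z0 m := funext hXrec'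
        rw [hfe]
        exact ((hXc.add ((hbm.comp hXc).const_mul h)).add
          (((hσm.comp hXc).const_mul sh).mul hWc)).add measurable_const
      have hYsuccG : Measurable[GAlgR X₀ Y₀ Z m.succ] (Yt m.succ) := by
        have hfe : Yt m.succ = fun ω => Yt m.castSucc ω + h * β m (Yt m.castSucc ω) ν
            + sh * θ m (Yt m.castSucc ω) ν * (if |Z m ω| ≤ cT then Z m ω else 0)
            + sh * σ0 m ν * z0 m := funext hYrec'
        rw [hfe]
        exact ((hYc.add ((hβm.comp hYc).const_mul h)).add
          (((hθm.comp hYc).const_mul sh).mul hWc)).add measurable_const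
      have hXsuccMeas : Measurable (Xt m.succ) :=
        hXsuccG.mono (GAlgR_le hX₀meas hY₀meas hZmeas _) le_rfl
      have hYsuccMeas : Measurable (Yt m.succ) :=
        hYsuccG.mono (GAlgR_le hX₀meas hY₀meas hZmeas _) le_rfl
      -- moments at the next step
      have hXsuccLp : MemLp (Xt m.succ) q P := by
        refine MemLp.of_le (g := fun ω => κ * (1 + R) + (1 + κ) * ‖Xt m.castSucc ω‖)
          ((memLp_const (κ * (1 + R))).add (hXLp.norm.const_mul (1 + κ)) :) hXsuccMeas.aestronglyMeasurable ?_
        refine Filter.Eventually.of_forall fun ω => ?_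
        have hb := habsX (Xt m.castSucc ω) _ (hWb m ω)
        have h2 : κ * (1 + R) + (1 + κ) * ‖Xt m.castSucc ω‖
            = (1 + κ) * |Xt m.castSucc ω| + κ * (1 + R) := by
          rw [Real.norm_eq_abs]; ring
        calc ‖Xt m.succ ω‖ = |Xt m.succ ω| := Real.norm_eq_abs _
          _ ≤ (1 + κ) * |Xt m.castSucc ω| + κ * (1 + R) := by rw [hXrec' ω]; exact hb
          _ = κ * (1 + R) + (1 + κ) * ‖Xt m.castSucc ω‖ := h2.symm
          _ ≤ ‖κ * (1 + R) + (1 + κ) * ‖Xt m.castSucc ω‖‖ :=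
              (le_abs_self _).trans_eq (Real.norm_eq_abs _).symm
      have hYsuccLp : MemLp (Yt m.succ) q P := by
        refine MemLp.of_le (g := fun ω => κ * (1 + R') + (1 + κ) * ‖Yt m.castSucc ω‖)
          ((memLp_const (κ * (1 + R'))).add (hYLp.norm.const_mul (1 + κ)) :) hYsuccMeas.aestronglyMeasurable ?_
        refine Filter.Eventually.of_forall fun ω => ?_
        have hb := habsY (Yt m.castSucc ω) _ (hWb m ω)
        have h2 : κ * (1 + R') + (1 + κ) * ‖Yt m.castSucc ω‖
            = (1 + κ) * |Yt m.castSucc ω| + κ * (1 + R') := by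
          rw [Real.norm_eq_abs]; ring
        calc ‖Yt m.succ ω‖ = |Yt m.succ ω| := Real.norm_eq_abs _
          _ ≤ (1 + κ) * |Yt m.castSucc ω| + κ * (1 + R') := by rw [hYrec' ω]; exact hb
          _ = κ * (1 + R') + (1 + κ) * ‖Yt m.castSucc ω‖ := h2.symm
          _ ≤ ‖κ * (1 + R') + (1 + κ) * ‖Yt m.castSucc ω‖‖ :=
              (le_abs_self _).trans_eq (Real.norm_eq_abs _).symm
      -- independence
      have hindepX : IndepFun (Xt m.castSucc) (Z m) P :=
        indepFun_of_G hX₀meas hY₀meas hZmeas hindep m hXGm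
      have hindepY : IndepFun (Yt m.castSucc) (Z m) P :=
        indepFun_of_G hX₀meas hY₀meas hZmeas hindep m hYGm
      have hindepXW : IndepFun (Xt m.castSucc)
          (fun ω => if |Z m ω| ≤ cT then Z m ω else 0) P :=
        hindepX.comp measurable_id (measurable_trunc cT)
      have hindepYW : IndepFun (Yt m.castSucc)
          (fun ω => if |Z m ω| ≤ cT then Z m ω else 0) P :=
        hindepY.comp measurable_id (measurable_trunc cT)
      refine ⟨⟨hXsuccLp, hYsuccLp⟩, ⟨hXsuccG, hYsuccG⟩, ?_⟩
      intro φ hφc hφm hφg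
      obtain ⟨Cφ, hCφ0, hCφ⟩ := hφg
      have hφmeas : Measurable φ := hφm.measurable
      set W : Ω → ℝ := fun ω => if |Z m ω| ≤ cT then Z m ω else 0 with hWdef
      set F : ℝ → ℝ → ℝ :=
        fun x w => φ (x + h * b m x μ + sh * σ m x μ * w + sh * σ0 m μ * z0 m) with hFdef
      set Gf : ℝ → ℝ → ℝ :=
        fun y w => φ (y + h * β m y ν + sh * θ m y ν * w + sh * σ0 m ν * z0 m) with hGfdef
      have hFshape : ∀ x, (fun ω => F x (W ω))
          = fun ω => φ ((x + h * b m x μ + sh * σ0 m μ * z0 m) + (sh * σ m x μ) * W ω) := by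
        intro x; funext ω
        simp only [hFdef]
        congr 1
        ring
      have hGshape : ∀ y, (fun ω => Gf y (W ω))
          = fun ω => φ ((y + h * β m y ν + sh * σ0 m ν * z0 m) + (sh * θ m y ν) * W ω) := by
        intro y; funext ω
        simp only [hGfdef]
        congr 1
        ring
      have hWmeas : Measurable W := hWm m
      have hWbd : ∀ ω, |W ω| ≤ cT := hWb m
      have hWsy : Measure.map (fun ω => -W ω) P = Measure.map W P := hWsym m
      have intF : ∀ x, Integrable (fun ω => F x (W ω)) P := by
        intro x
        rw [hFshape x]
        exact integrable_phi_affine hφm hWmeas hWbd _ _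
      have intGf : ∀ y, Integrable (fun ω => Gf y (W ω)) P := by
        intro y
        rw [hGshape y]
        exact integrable_phi_affine hφm hWmeas hWbd _ _
      -- monotonicity of the argument in x
      have hmono_arg : ∀ x y w, x ≤ y → |w| ≤ cT →
          x + h * b m x μ + sh * σ m x μ * w + sh * σ0 m μ * z0 m
            ≤ y + h * b m y μ + sh * σ m y μ * w + sh * σ0 m μ * z0 m := by
        intro x y w hxy hw
        have hbl := hbLip m μ hμpp x y
        have habs : |x - y| = y - x := by
          rw [abs_sub_comm]; exact abs_of_nonneg (by linarith)
        rw [habs] at hbl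
        have h1 : b m x μ - b m y μ ≤ Lb * (y - x) := le_trans (le_abs_self _) hbl
        have h3 : sh * σ m x μ * w - sh * σ m y μ * w ≤ 1 / 2 * (y - x) := by
          have e : sh * σ m x μ * w - sh * σ m y μ * w
              = (σ m x μ - σ m y μ) * (sh * w) := by ring
          calc sh * σ m x μ * w - sh * σ m y μ * w
              ≤ |sh * σ m x μ * w - sh * σ m y μ * w| := le_abs_self _
            _ = |σ m x μ - σ m y μ| * |sh * w| := by rw [e, abs_mul]
            _ ≤ (Lσ * (y - x)) * (sh * cT) := by
                refine mul_le_mul ?_ ?_ (abs_nonneg _)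
                  (mul_nonneg hLσ.le (by linarith))
                · have hsl := hσLip m μ hμpp x y
                  rw [habs] at hsl
                  exact hsl
                · rw [abs_mul, abs_of_nonneg hsh0.le]
                  exact mul_le_mul_of_nonneg_left hw hsh0.le
            _ = (sh * Lσ * cT) * (y - x) := by ring
            _ = 1 / 2 * (y - x) := by rw [hshc]
        have h4 : h * (b m x μ - b m y μ) ≤ h * (Lb * (y - x)) :=
          mul_le_mul_of_nonneg_left h1 hh0.le
        have h5 : h * (Lb * (y - x)) ≤ 1 / 2 * (y - x) := by
          nlinarith [mul_nonneg (show (0:ℝ) ≤ 1 - 2 * Lb * h by linarith)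
            (show (0:ℝ) ≤ y - x by linarith)]
        linarith
      set Φ : ℝ → ℝ := fun x => ∫ ω, F x (W ω) ∂P with hΦdef
      set Ψ : ℝ → ℝ := fun y => ∫ ω, Gf y (W ω) ∂P with hΨdef
      have hΦmono : Monotone Φ := by
        intro x y hxy
        simp only [hΦdef]
        refine integral_mono (intF x) (intF y) fun ω => ?_
        exact hφm (hmono_arg x y (W ω) hxy (hWbd ω))
      -- convexity of Φ
      have hbcv := hbconv m μ hμpp
      have hσcv := hσconv m μ hμpp
      have hσ0X : ∀ x, 0 ≤ σ m x μ := fun x => (hσθ m x μ hμpp).1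
      have hΦconv : ConvexOn ℝ Set.univ Φ := by
        refine ⟨convex_univ, fun x _ y _ lx ly hlx hly hsum => ?_⟩
        simp only [smul_eq_mul]
        set A : ℝ := lx * (x + h * b m x μ + sh * σ0 m μ * z0 m)
          + ly * (y + h * b m y μ + sh * σ0 m μ * z0 m) with hAdef
        set S : ℝ := lx * (sh * σ m x μ) + ly * (sh * σ m y μ) with hSdef
        have ha : (lx * x + ly * y) + h * b m (lx * x + ly * y) μ
            + sh * σ0 m μ * z0 m ≤ A := by
          have hcb := hbcv.2 (Set.mem_univ x) (Set.mem_univ y) hlx hly hsum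
          simp only [smul_eq_mul] at hcb
          have hmul := mul_le_mul_of_nonneg_left hcb hh0.le
          have he : lx * (sh * σ0 m μ * z0 m) + ly * (sh * σ0 m μ * z0 m)
              = sh * σ0 m μ * z0 m := by linear_combination (sh * σ0 m μ * z0 m) * hsum
          rw [hAdef]
          nlinarith [hmul, he]
        have hs1 : 0 ≤ sh * σ m (lx * x + ly * y) μ := mul_nonneg hsh0.le (hσ0X _)
        have hs2 : sh * σ m (lx * x + ly * y) μ ≤ S := by
          have hcσ := hσcv.2 (Set.mem_univ x) (Set.mem_univ y) hlx hly hsum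
          simp only [smul_eq_mul] at hcσ
          have hmul := mul_le_mul_of_nonneg_left hcσ hsh0.le
          rw [hSdef]
          nlinarith [hmul]
        have k1 : Φ (lx * x + ly * y) ≤ ∫ ω, φ (A + S * W ω) ∂P := by
          have e0 : Φ (lx * x + ly * y) = ∫ ω, φ (((lx * x + ly * y)
              + h * b m (lx * x + ly * y) μ + sh * σ0 m μ * z0 m)
              + (sh * σ m (lx * x + ly * y) μ) * W ω) ∂P := by
            simp only [hΦdef]
            rw [hFshape (lx * x + ly * y)]
          rw [e0]
          exact kernel_mono hφc hφm hWmeas hWbd hWsy ha hs1 hs2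
        have k2 : ∫ ω, φ (A + S * W ω) ∂P ≤ lx * Φ x + ly * Φ y := by
          have hptw : ∀ ω, φ (A + S * W ω) ≤ lx * F x (W ω) + ly * F y (W ω) := by
            intro ω
            have harg : A + S * W ω
                = lx * (x + h * b m x μ + sh * σ m x μ * W ω + sh * σ0 m μ * z0 m)
                  + ly * (y + h * b m y μ + sh * σ m y μ * W ω + sh * σ0 m μ * z0 m) := by
              rw [hAdef, hSdef]; ring
            have hcv := hφc.2
              (Set.mem_univ (x + h * b m x μ + sh * σ m x μ * W ω + sh * σ0 m μ * z0 m))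
              (Set.mem_univ (y + h * b m y μ + sh * σ m y μ * W ω + sh * σ0 m μ * z0 m))
              hlx hly hsum
            simp only [smul_eq_mul] at hcv
            rw [harg]
            exact hcv
          have hint0 : Integrable (fun ω => φ (A + S * W ω)) P :=
            integrable_phi_affine hφm hWmeas hWbd _ _
          have hintc : Integrable (fun ω => lx * F x (W ω) + ly * F y (W ω)) P :=
            ((intF x).const_mul lx).add ((intF y).const_mul ly)
          have hmono2 := integral_mono hint0 hintc hptw
          rwa [integral_add ((intF x).const_mul lx) ((intF y).const_mul ly),
            integral_const_mul, integral_const_mul] at hmono2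
        exact k1.trans k2
      -- bounds and growth of Φ and Ψ
      have hFb : ∀ x w, |w| ≤ cT →
          |F x w| ≤ Cφ * (1 + κ * (1 + R)) + Cφ * (1 + κ) * |x| := by
        intro x w hw
        have h1 := hCφ (x + h * b m x μ + sh * σ m x μ * w + sh * σ0 m μ * z0 m)
        have h2 := habsX x w hw
        calc |F x w|
            ≤ Cφ * (1 + |x + h * b m x μ + sh * σ m x μ * w + sh * σ0 m μ * z0 m|) := h1
          _ ≤ Cφ * (1 + ((1 + κ) * |x| + κ * (1 + R))) :=
              mul_le_mul_of_nonneg_left (by linarith) hCφ0.le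
          _ = Cφ * (1 + κ * (1 + R)) + Cφ * (1 + κ) * |x| := by ring
      have hGb : ∀ y w, |w| ≤ cT →
          |Gf y w| ≤ Cφ * (1 + κ * (1 + R')) + Cφ * (1 + κ) * |y| := by
        intro y w hw
        have h1 := hCφ (y + h * β m y ν + sh * θ m y ν * w + sh * σ0 m ν * z0 m)
        have h2 := habsY y w hw
        calc |Gf y w|
            ≤ Cφ * (1 + |y + h * β m y ν + sh * θ m y ν * w + sh * σ0 m ν * z0 m|) := h1
          _ ≤ Cφ * (1 + ((1 + κ) * |y| + κ * (1 + R'))) :=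
              mul_le_mul_of_nonneg_left (by linarith) hCφ0.le
          _ = Cφ * (1 + κ * (1 + R')) + Cφ * (1 + κ) * |y| := by ring
      have hΦb : ∀ x, |Φ x| ≤ Cφ * (1 + κ * (1 + R)) + Cφ * (1 + κ) * |x| := by
        intro x
        have hn : |Φ x| ≤ ∫ ω, |F x (W ω)| ∂P := by
          simpa [Real.norm_eq_abs] using
            norm_integral_le_integral_norm (μ := P) (f := fun ω => F x (W ω))
        have h2 : ∫ ω, |F x (W ω)| ∂P
            ≤ Cφ * (1 + κ * (1 + R)) + Cφ * (1 + κ) * |x| := by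
          have hle := integral_mono (intF x).abs
            (integrable_const (Cφ * (1 + κ * (1 + R)) + Cφ * (1 + κ) * |x|))
            (fun ω => hFb x (W ω) (hWbd ω))
          simpa using hle
        linarith
      have hΨb : ∀ y, |Ψ y| ≤ Cφ * (1 + κ * (1 + R')) + Cφ * (1 + κ) * |y| := by
        intro y
        have hn : |Ψ y| ≤ ∫ ω, |Gf y (W ω)| ∂P := by
          simpa [Real.norm_eq_abs] using
            norm_integral_le_integral_norm (μ := P) (f := fun ω => Gf y (W ω))
        have h2 : ∫ ω, |Gf y (W ω)| ∂P
            ≤ Cφ * (1 + κ * (1 + R')) + Cφ * (1 + κ) * |y| := by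
          have hle := integral_mono (intGf y).abs
            (integrable_const (Cφ * (1 + κ * (1 + R')) + Cφ * (1 + κ) * |y|))
            (fun ω => hGb y (W ω) (hWbd ω))
          simpa using hle
        linarith
      have hA0 : 0 < Cφ * (1 + κ * (1 + R)) :=
        mul_pos hCφ0 (by nlinarith [mul_nonneg hκ0 (show (0:ℝ) ≤ 1 + R by linarith)])
      have hB0 : 0 < Cφ * (1 + κ) := mul_pos hCφ0 (by linarith)
      have hΦgrow : LinGrowth1 Φ := by
        refine ⟨Cφ * (1 + κ * (1 + R)) + Cφ * (1 + κ), by linarith, fun x => ?_⟩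
        have := hΦb x
        nlinarith [mul_nonneg hA0.le (abs_nonneg x), mul_nonneg hB0.le (abs_nonneg x)]
      -- Φ ≤ Ψ pointwise
      have hΦΨ : ∀ y, Φ y ≤ Ψ y := by
        intro y
        have e1 : Φ y = ∫ ω, φ ((y + h * b m y μ + sh * σ0 m μ * z0 m)
            + (sh * σ m y μ) * W ω) ∂P := by
          simp only [hΦdef]
          rw [hFshape y]
        have e2 : Ψ y = ∫ ω, φ ((y + h * β m y ν + sh * σ0 m ν * z0 m)
            + (sh * θ m y ν) * W ω) ∂P := by
          simp only [hΨdef]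
          rw [hGshape y]
        rw [e1, e2]
        refine kernel_mono hφc hφm hWmeas hWbd hWsy ?_
          (mul_nonneg hsh0.le (hσ0X y)) ?_
        · have hbb := hbmono m y μ ν hμpp hνpp hicv
          have hββ := hbβ m y ν hνpp
          have hσ0e := hσ0const m μ ν hμpp hνpp hicv
          rw [hσ0e]
          have := mul_le_mul_of_nonneg_left (hbb.trans hββ) hh0.le
          linarith
        · have h1 := hσmono m y μ ν hμpp hνpp hicv
          have h2 := (hσθ m y ν hνpp).2
          exact mul_le_mul_of_nonneg_left (h1.trans h2) hsh0.le
      -- joint measurability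
      have hFq : Measurable fun qq : ℝ × ℝ => F qq.1 qq.2 := by
        simp only [hFdef]
        exact hφmeas.comp (((measurable_fst.add ((hbm.comp measurable_fst).const_mul h)).add
          (((hσm.comp measurable_fst).const_mul sh).mul measurable_snd)).add measurable_const)
      have hGq : Measurable fun qq : ℝ × ℝ => Gf qq.1 qq.2 := by
        simp only [hGfdef]
        exact hφmeas.comp (((measurable_fst.add ((hβm.comp measurable_fst).const_mul h)).add
          (((hθm.comp measurable_fst).const_mul sh).mul measurable_snd)).add measurable_const)
      have hGJ : Measurable fun qq : ℝ × Ω => Gf qq.1 (W qq.2) :=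
        hGq.comp (measurable_fst.prodMk (hWmeas.comp measurable_snd))
      have hΨsm : StronglyMeasurable Ψ := hGJ.stronglyMeasurable.integral_prod_right'
      -- integrability with respect to ν
      have hintν : ∀ c1 c2 : ℝ, Integrable (fun ξ : ℝ => c1 + c2 * |ξ|) ν := by
        intro c1 c2
        rw [hνdef]
        refine (integrable_map_measure ?_ hYm.aemeasurable).2 ?_
        · exact (measurable_const.add (measurable_abs.const_mul c2)).aestronglyMeasurable
        · exact (integrable_const c1).add (((hYLp.integrable hq1).abs).const_mul c2)
      have hΦintν : Integrable Φ ν :=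
        Integrable.mono' (hintν (Cφ * (1 + κ * (1 + R))) (Cφ * (1 + κ)))
          hΦmono.measurable.aestronglyMeasurable
          (Filter.Eventually.of_forall fun y => by rw [Real.norm_eq_abs]; exact hΦb y)
      have hΨintν : Integrable Ψ ν :=
        Integrable.mono' (hintν (Cφ * (1 + κ * (1 + R'))) (Cφ * (1 + κ)))
          hΨsm.aestronglyMeasurable
          (Filter.Eventually.of_forall fun y => by rw [Real.norm_eq_abs]; exact hΨb y)
      -- the chain of (in)equalities
      have hxe : (fun ω => φ (Xt m.succ ω)) = fun ω => F (Xt m.castSucc ω) (W ω) := by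
        funext ω
        simp only [hFdef, hWdef]
        rw [hXrec' ω]
      have hye : (fun ω => φ (Yt m.succ ω)) = fun ω => Gf (Yt m.castSucc ω) (W ω) := by
        funext ω
        simp only [hGfdef, hWdef]
        rw [hYrec' ω]
      have hIntX : Integrable (fun ω => F (Xt m.castSucc ω) (W ω)) P := by
        rw [← hxe]
        refine Integrable.mono' (g := fun ω => Cφ * (1 + |Xt m.succ ω|)) ?_
          (hφmeas.comp hXsuccMeas).aestronglyMeasurable
          (Filter.Eventually.of_forall fun ω => by rw [Real.norm_eq_abs]; exact hCφ _)
        exact ((integrable_const (1:ℝ)).add ((hXsuccLp.integrable hq1).abs)).const_mul Cφ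
      have hIntY : Integrable (fun ω => Gf (Yt m.castSucc ω) (W ω)) P := by
        rw [← hye]
        refine Integrable.mono' (g := fun ω => Cφ * (1 + |Yt m.succ ω|)) ?_
          (hφmeas.comp hYsuccMeas).aestronglyMeasurable
          (Filter.Eventually.of_forall fun ω => by rw [Real.norm_eq_abs]; exact hCφ _)
        exact ((integrable_const (1:ℝ)).add ((hYsuccLp.integrable hq1).abs)).const_mul Cφ
      have hfub1 : ∫ ω, F (Xt m.castSucc ω) (W ω) ∂P = ∫ x, Φ x ∂μ := by
        rw [hμdef]
        exact indep_integral_eq hXm hWmeas hindepXW hFq hIntX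
      have hfub2 : ∫ ω, Gf (Yt m.castSucc ω) (W ω) ∂P = ∫ y, Ψ y ∂ν := by
        rw [hνdef]
        exact indep_integral_eq hYm hWmeas hindepYW hGq hIntY
      have hstep1 : ∫ xx, φ xx ∂(Measure.map (Xt m.succ) P) = ∫ ω, φ (Xt m.succ ω) ∂P :=
        integral_map hXsuccMeas.aemeasurable hφmeas.aestronglyMeasurable
      have hstep2 : ∫ xx, φ xx ∂(Measure.map (Yt m.succ) P) = ∫ ω, φ (Yt m.succ ω) ∂P :=
        integral_map hYsuccMeas.aemeasurable hφmeas.aestronglyMeasurable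
      calc ∫ xx, φ xx ∂(Measure.map (Xt m.succ) P)
          = ∫ ω, φ (Xt m.succ ω) ∂P := hstep1
        _ = ∫ ω, F (Xt m.castSucc ω) (W ω) ∂P := by rw [hxe]
        _ = ∫ x, Φ x ∂μ := hfub1
        _ ≤ ∫ x, Φ x ∂ν := hicv Φ hΦconv hΦmono hΦgrow
        _ ≤ ∫ y, Ψ y ∂ν := integral_mono hΦintν hΨintν hΦΨ
        _ = ∫ ω, Gf (Yt m.castSucc ω) (W ω) ∂P := hfub2.symm
        _ = ∫ ω, φ (Yt m.succ ω) ∂P := by rw [hye]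
        _ = ∫ xx, φ xx ∂(Measure.map (Yt m.succ) P) := hstep2.symm
  exact fun m => (key m).2.2

end
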